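/- Let n ≥ 6 and G = K₃ ∨ (K_{n−5} + 2K₁) (a graph on n vertices). Then ρ_D(G) > (2n² + 6n − 36)/n. -/

import Mathlib

open SimpleGraph Finset

/-- The transmission of a vertex: sum of distances to all other vertices. -/
noncomputable def transmission {V : Type*} [Fintype V] (G : SimpleGraph V) (u : V) : ℕ :=
  ∑ v, G.dist u v

/-- The transmission σ(G): sum of distances over all unordered pairs. -/
noncomputable def transmissionOf {V : Type*} [Fintype V] (G : SimpleGraph V) : ℝ :=
  (1 / 2) * ∑ u, ∑ v, (G.dist u v : ℝ)

/-- The distance signless Laplacian matrix Q_D(G) = Tr(G) + 𝒟(G). -/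
noncomputable def distSignlessLaplacian {V : Type*} [Fintype V] [DecidableEq V]
    (G : SimpleGraph V) : Matrix V V ℝ :=
  fun u v => (if u = v then (transmission G u : ℝ) else 0) + (G.dist u v : ℝ)

/-- `ρ` is the distance signless Laplacian spectral radius of `G`,
i.e. the largest eigenvalue of `Q_D(G)`. -/
noncomputable def IsDistSLSpectralRadius {V : Type*} [Fintype V] [DecidableEq V]
    (G : SimpleGraph V) (ρ : ℝ) : Prop :=
  IsGreatest {μ : ℝ | Module.End.HasEigenvalue (Matrix.toLin' (distSignlessLaplacian G)) μ} ρ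

/-- Join of two graphs. -/
def joinGraph {α β : Type*} (G : SimpleGraph α) (H : SimpleGraph β) : SimpleGraph (α ⊕ β) :=
  SimpleGraph.fromRel (fun x y =>
    match x, y with
    | Sum.inl a, Sum.inl b => G.Adj a b
    | Sum.inr a, Sum.inr b => H.Adj a b
    | Sum.inl _, Sum.inr _ => True
    | Sum.inr _, Sum.inl _ => False)

/-- The graph H_{t,n-t}. -/
def HGraph (n t : ℕ) : SimpleGraph (Fin n ⊕ Fin n) :=
  SimpleGraph.fromRel (fun x y =>
    match x, y with
    | Sum.inl i, Sum.inr j => (j : ℕ) < n - t ∨ (i : ℕ) < t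
    | _, _ => False)

/-- Hamilton-connected. -/
def IsHamiltonianConnected {V : Type*} [DecidableEq V] (G : SimpleGraph V) : Prop :=
  ∀ u v : V, u ≠ v → ∃ p : G.Walk u v, p.IsHamiltonian

/-- Traceable from every vertex. -/
def TraceableFromEveryVertex {V : Type*} [DecidableEq V] (G : SimpleGraph V) : Prop :=
  ∀ u : V, ∃ v : V, ∃ p : G.Walk u v, p.IsHamiltonian

/-- K_{n-1} + e : complete graph on n-1 vertices with a pendant edge. -/
def KPlusPendant (n : ℕ) : SimpleGraph (Fin (n - 1) ⊕ Fin 1) :=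
  SimpleGraph.fromRel (fun x y =>
    match x, y with
    | Sum.inl a, Sum.inl b => a ≠ b
    | Sum.inl a, Sum.inr _ => (a : ℕ) = 0
    | _, _ => False)

section aux
open Sum

variable {n : ℕ}

noncomputable abbrev GG (n : ℕ) : SimpleGraph (Fin 3 ⊕ (Fin (n - 5) ⊕ Fin 2)) :=
  joinGraph (⊤ : SimpleGraph (Fin 3))
    ((⊤ : SimpleGraph (Fin (n - 5))) ⊕g (⊥ : SimpleGraph (Fin 2)))

lemma GG_adj_lr (a : Fin 3) (x : Fin (n-5) ⊕ Fin 2) : (GG n).Adj (inl a) (inr x) := by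
  simp [joinGraph, SimpleGraph.fromRel_adj]

lemma GG_adj_ll {a b : Fin 3} (h : a ≠ b) : (GG n).Adj (inl a) (inl b) := by
  simp [joinGraph, SimpleGraph.fromRel_adj, h]

lemma GG_adj_rr_ll {i j : Fin (n-5)} (h : i ≠ j) :
    (GG n).Adj (inr (inl i)) (inr (inl j)) := by
  simp [joinGraph, SimpleGraph.fromRel_adj, h]

lemma GG_nadj_rr_lr (i : Fin (n-5)) (j : Fin 2) :
    ¬ (GG n).Adj (inr (inl i)) (inr (inr j)) := by
  simp [joinGraph, SimpleGraph.fromRel_adj]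

lemma GG_nadj_rr_rr (i j : Fin 2) :
    ¬ (GG n).Adj (inr (inr i)) (inr (inr j)) := by
  simp [joinGraph, SimpleGraph.fromRel_adj]

lemma GG_dist_two {x y : Fin (n-5) ⊕ Fin 2} (hxy : x ≠ y)
    (hna : ¬ (GG n).Adj (inr x) (inr y)) : (GG n).dist (inr x) (inr y) = 2 := by
  have h1 : (GG n).Adj (inr x) (inl 0) := (GG_adj_lr 0 x).symm
  have h2 : (GG n).Adj (inl 0) (inr y) := GG_adj_lr 0 y
  have hle : (GG n).dist (inr x) (inr y) ≤ 2 := by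
    simpa using SimpleGraph.dist_le (Walk.cons h1 (Walk.cons h2 Walk.nil))
  have h0 : (GG n).dist (inr x) (inr y) ≠ 0 :=
    Nat.pos_iff_ne_zero.mp
      ((Walk.cons h1 (Walk.cons h2 Walk.nil)).reachable.pos_dist_of_ne (by simp [hxy]))
  have h1' : (GG n).dist (inr x) (inr y) ≠ 1 := fun h =>
    hna (SimpleGraph.dist_eq_one_iff_adj.mp h)
  omega

lemma GG_dist_adj {u v : Fin 3 ⊕ (Fin (n-5) ⊕ Fin 2)} (h : (GG n).Adj u v) :
    (GG n).dist u v = 1 := SimpleGraph.dist_eq_one_iff_adj.mpr h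

end aux

section aux2
open Sum
variable {n : ℕ}

lemma sum_ite_ne {m : ℕ} (a : Fin m) (c : ℕ) :
    ∑ b : Fin m, (if a = b then 0 else c) = (m - 1) * c := by
  rw [← Finset.add_sum_erase _ _ (Finset.mem_univ a), if_pos rfl, zero_add]
  rw [Finset.sum_congr rfl (fun b hb => if_neg (Ne.symm (Finset.mem_erase.mp hb).1))]
  simp [Finset.card_erase_of_mem]

lemma GG_dist_ll (a b : Fin 3) : (GG n).dist (inl a) (inl b) = if a = b then 0 else 1 := by
  split
  · simp [*]
  · exact GG_dist_adj (GG_adj_ll (by assumption))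

lemma GG_dist_lr (a : Fin 3) (x : Fin (n-5) ⊕ Fin 2) : (GG n).dist (inl a) (inr x) = 1 :=
  GG_dist_adj (GG_adj_lr a x)

lemma GG_dist_rl (x : Fin (n-5) ⊕ Fin 2) (a : Fin 3) : (GG n).dist (inr x) (inl a) = 1 := by
  rw [SimpleGraph.dist_comm]; exact GG_dist_lr a x

lemma GG_dist_rll (i j : Fin (n-5)) :
    (GG n).dist (inr (inl i)) (inr (inl j)) = if i = j then 0 else 1 := by
  split
  · simp [*]
  · exact GG_dist_adj (GG_adj_rr_ll (by assumption))

lemma GG_dist_rlr (i : Fin (n-5)) (j : Fin 2) :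
    (GG n).dist (inr (inl i)) (inr (inr j)) = 2 :=
  GG_dist_two (by simp) (GG_nadj_rr_lr i j)

lemma GG_dist_rrl (j : Fin 2) (i : Fin (n-5)) :
    (GG n).dist (inr (inr j)) (inr (inl i)) = 2 := by
  rw [SimpleGraph.dist_comm]; exact GG_dist_rlr i j

lemma GG_dist_rrr (i j : Fin 2) :
    (GG n).dist (inr (inr i)) (inr (inr j)) = if i = j then 0 else 2 := by
  split
  · simp [*]
  · exact GG_dist_two (by simp [*]) (GG_nadj_rr_rr i j)

lemma GG_tr_l (a : Fin 3) : transmission (GG n) (inl a) = 2 + ((n-5) + 2) := by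
  unfold transmission
  rw [Fintype.sum_sum_type]
  congr 1
  · rw [Finset.sum_congr rfl fun b _ => GG_dist_ll a b, sum_ite_ne]
  · rw [Finset.sum_congr rfl fun x _ => GG_dist_lr a x]
    simp

lemma GG_tr_rl (i : Fin (n-5)) :
    transmission (GG n) (inr (inl i)) = 3 + ((n - 5 - 1) + 4) := by
  unfold transmission
  rw [Fintype.sum_sum_type]
  congr 1
  · rw [Finset.sum_congr rfl fun a _ => GG_dist_rl (inl i) a]; simp
  · rw [Fintype.sum_sum_type]
    congr 1
    · rw [Finset.sum_congr rfl fun j _ => GG_dist_rll i j, sum_ite_ne]; ring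
    · rw [Finset.sum_congr rfl fun j _ => GG_dist_rlr i j]; simp

lemma GG_tr_rr (j : Fin 2) :
    transmission (GG n) (inr (inr j)) = 3 + (2 * (n - 5) + 2) := by
  unfold transmission
  rw [Fintype.sum_sum_type]
  congr 1
  · rw [Finset.sum_congr rfl fun a _ => GG_dist_rl (inr j) a]; simp
  · rw [Fintype.sum_sum_type]
    congr 1
    · rw [Finset.sum_congr rfl fun i _ => GG_dist_rrl j i]; simp [mul_comm]
    · rw [Finset.sum_congr rfl fun k _ => GG_dist_rrr j k, sum_ite_ne]

end aux2

section main
open Sum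

theorem stmt_10 (n : ℕ) (hn : 6 ≤ n) (ρ : ℝ)
    (hρ : IsDistSLSpectralRadius (joinGraph (⊤ : SimpleGraph (Fin 3))
      ((⊤ : SimpleGraph (Fin (n - 5))) ⊕g (⊥ : SimpleGraph (Fin 2)))) ρ) :
    (2 * (n : ℝ) ^ 2 + 6 * (n : ℝ) - 36) / (n : ℝ) < ρ := by
  obtain ⟨k, rfl⟩ : ∃ k, n = k + 5 := ⟨n - 5, by omega⟩
  have hk : 1 ≤ k := by omega
  set n := k + 5 with hn5
  have hsub : n - 5 = k := by omega
  set V := Fin 3 ⊕ (Fin (n - 5) ⊕ Fin 2) with hVdef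
  set E := EuclideanSpace ℝ V with hEdef
  have hρ' : IsGreatest {μ : ℝ |
      Module.End.HasEigenvalue (Matrix.toLin' (distSignlessLaplacian (GG n))) μ} ρ := hρ
  set M := distSignlessLaplacian (GG n) with hMdef
  -- symmetry
  have hMsymm : ∀ u v, M u v = M v u := by
    intro u v
    rcases eq_or_ne u v with rfl | h
    · rfl
    · simp [hMdef, distSignlessLaplacian, h, h.symm, SimpleGraph.dist_comm]
  have hHerm : M.IsHermitian := by
    ext u v
    simp [Matrix.conjTranspose_apply, hMsymm u v]
  set T := Matrix.toEuclideanLin M with hTdef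
  have hT : T.IsSymmetric := Matrix.isHermitian_iff_isSymmetric.mp hHerm
  -- the all-ones vector
  set x₀ : E := (WithLp.equiv 2 (V → ℝ)).symm (fun _ => 1) with hx₀def
  have hx₀app : ∀ u : V, x₀ u = 1 := fun u => rfl
  have hx₀ne : x₀ ≠ 0 := by
    intro h
    have h1 : x₀ (Sum.inl 0) = (0 : E) (Sum.inl 0) := congrFun (congrArg (fun z : E => (z : V → ℝ)) h) (Sum.inl 0)
    rw [hx₀app (Sum.inl 0)] at h1
    exact one_ne_zero h1
  haveI : Nontrivial E := ⟨⟨x₀, 0, hx₀ne⟩⟩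
  -- T applied coordinatewise
  have hTapp : ∀ (y : E) (u : V), (T y) u = ∑ v, M u v * y v := by
    intro y u
    rfl
  have rowsum : ∀ u : V, ∑ v, M u v = 2 * (transmission (GG n) u : ℝ) := by
    intro u
    have hrw : ∀ v : V, M u v
        = (if u = v then (transmission (GG n) u : ℝ) else 0) + ((GG n).dist u v : ℝ) :=
      fun v => rfl
    rw [Finset.sum_congr rfl fun v _ => hrw v, Finset.sum_add_distrib, Finset.sum_ite_eq]
    have : ∑ v : V, ((GG n).dist u v : ℝ) = (transmission (GG n) u : ℝ) := by
      rw [transmission]; push_cast; ring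
    rw [this]
    simp
    ring
  have hTx₀ : ∀ u : V, (T x₀) u = 2 * (transmission (GG n) u : ℝ) := by
    intro u
    rw [hTapp x₀ u, ← rowsum u]
    exact Finset.sum_congr rfl fun v _ => by rw [hx₀app v, mul_one]
  -- transmission values (as reals)
  have trl : ∀ a : Fin 3, (transmission (GG n) (inl a) : ℝ) = (k : ℝ) + 4 := by
    intro a
    have h1 : 2 + ((n - 5) + 2) = k + 4 := by omega
    rw [GG_tr_l, h1]; push_cast; ring
  have trrl : ∀ i : Fin (n - 5), (transmission (GG n) (inr (inl i)) : ℝ) = (k : ℝ) + 6 := by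
    intro i
    have h1 : 3 + ((n - 5 - 1) + 4) = k + 6 := by omega
    rw [GG_tr_rl, h1]; push_cast; ring
  have trrr : ∀ j : Fin 2, (transmission (GG n) (inr (inr j)) : ℝ) = 2 * (k : ℝ) + 5 := by
    intro j
    have h1 : 3 + (2 * (n - 5) + 2) = 2 * k + 5 := by omega
    rw [GG_tr_rr, h1]; push_cast; ring
  have hsum : ∑ u : V, (transmission (GG n) u : ℝ) = (k : ℝ) ^ 2 + 13 * k + 22 := by
    rw [show (Finset.univ.sum fun u : V => (transmission (GG n) u : ℝ))
        = (∑ a : Fin 3, (transmission (GG n) (inl a) : ℝ))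
          + ((∑ i : Fin (n - 5), (transmission (GG n) (inr (inl i)) : ℝ))
            + ∑ j : Fin 2, (transmission (GG n) (inr (inr j)) : ℝ)) from by
      rw [Fintype.sum_sum_type, Fintype.sum_sum_type]]
    rw [Finset.sum_congr rfl fun a _ => trl a, Finset.sum_congr rfl fun i _ => trrl i,
      Finset.sum_congr rfl fun j _ => trrr j]
    simp [Finset.sum_const, Finset.card_univ, hsub]
    ring
  -- inner products
  have hinner : ∀ y : E, (inner ℝ (T y) y : ℝ) = ∑ u, (T y) u * y u := by
    intro y
    rw [PiLp.inner_apply]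
    exact Finset.sum_congr rfl fun u _ => by
      rw [RCLike.inner_apply, conj_trivial, mul_comm]
  have hinner₀ : (inner ℝ (T x₀) x₀ : ℝ) = 2 * ((k : ℝ) ^ 2 + 13 * k + 22) := by
    rw [hinner x₀, Finset.sum_congr rfl fun u _ => by rw [hTx₀ u, hx₀app u, mul_one],
      ← Finset.mul_sum, hsum]
  have hnormx₀ : ‖x₀‖ ^ 2 = (k : ℝ) + 5 := by
    rw [← real_inner_self_eq_norm_sq, PiLp.inner_apply]
    rw [Finset.sum_congr rfl fun u _ => by
      rw [RCLike.inner_apply, conj_trivial, hx₀app u, mul_one]]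
    simp only [Finset.sum_const, Finset.card_univ, nsmul_eq_mul, mul_one]
    have hcard : Fintype.card V = k + 5 := by
      simp [hVdef, Fintype.card_sum, hsub]; omega
    rw [hcard]; push_cast; ring
  -- continuous version
  set Tc := LinearMap.toContinuousLinearMap T with hTcdef
  have hTcapp : ∀ y : E, Tc y = T y := fun y => rfl
  have hbdd : BddAbove (Set.range fun x : {x : E // x ≠ 0} =>
      RCLike.re (inner ℝ (T x) (x : E) : ℝ) / ‖(x : E)‖ ^ 2) := by
    refine ⟨‖Tc‖, ?_⟩
    rintro r ⟨x, rfl⟩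
    have hxn : (0 : ℝ) < ‖(x : E)‖ := norm_pos_iff.mpr x.2
    simp only [RCLike.re_to_real]
    rw [div_le_iff₀ (by positivity)]
    calc (inner ℝ (T x) (x : E) : ℝ) ≤ ‖T (x : E)‖ * ‖(x : E)‖ := real_inner_le_norm _ _
      _ ≤ (‖Tc‖ * ‖(x : E)‖) * ‖(x : E)‖ := by
          have h1 := Tc.le_opNorm (x : E)
          rw [hTcapp] at h1
          nlinarith [norm_nonneg ((x : E))]
      _ = ‖Tc‖ * ‖(x : E)‖ ^ 2 := by ring
  set μ : ℝ := ⨆ x : {x : E // x ≠ 0},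
      RCLike.re (inner ℝ (T x) (x : E) : ℝ) / ‖(x : E)‖ ^ 2 with hμdef
  have hμev : Module.End.HasEigenvalue T μ := hT.hasEigenvalue_iSup_of_finiteDimensional
  -- eigenvalue transfer to toLin'
  have transfer : ∀ {c : ℝ}, Module.End.HasEigenvalue T c →
      Module.End.HasEigenvalue (Matrix.toLin' M) c := by
    intro c hc
    obtain ⟨v, hv⟩ := hc.exists_hasEigenvector
    have hveq : T v = c • v := Module.End.mem_eigenspace_iff.mp hv.1
    have hveq' : Matrix.toLin' M (WithLp.ofLp v) = c • WithLp.ofLp v := by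
      funext u
      have h := congrArg (fun z : E => z u) hveq
      simp only [hTapp] at h
      simpa [Matrix.mulVec, dotProduct] using h
    exact Module.End.hasEigenvalue_of_hasEigenvector
      ⟨Module.End.mem_eigenspace_iff.mpr hveq', by
        intro h; apply hv.2; ext u; simpa using congrFun h u⟩
  have hμρ : μ ≤ ρ := hρ'.2 (transfer hμev)
  -- Rayleigh quotients are at most μ
  have hray : ∀ y : E, y ≠ 0 → (inner ℝ (T y) y : ℝ) / ‖y‖ ^ 2 ≤ μ := by
    intro y hy
    have h0 := le_ciSup hbdd ⟨y, hy⟩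
    rw [hμdef]
    simpa only [RCLike.re_to_real] using h0
  -- main strict inequality
  by_contra hcon
  push_neg at hcon
  have hnn : ((n : ℕ) : ℝ) = (k : ℝ) + 5 := by push_cast [hn5]; ring
  have hrhs : (2 * (n : ℝ) ^ 2 + 6 * (n : ℝ) - 36) / (n : ℝ)
      = 2 * ((k : ℝ) ^ 2 + 13 * k + 22) / ((k : ℝ) + 5) := by
    rw [hnn]; ring_nf
  have hkpos : (0 : ℝ) < (k : ℝ) + 5 := by positivity
  have hρle : ρ ≤ 2 * ((k : ℝ) ^ 2 + 13 * k + 22) / ((k : ℝ) + 5) := by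
    rw [← hrhs]; exact hcon
  -- x₀ is a maximum of the Rayleigh functional on its sphere
  have hmax : IsMaxOn Tc.reApplyInnerSelf (Metric.sphere (0 : E) ‖x₀‖) x₀ := by
    rw [isMaxOn_iff]
    intro y hy
    have hyn : ‖y‖ = ‖x₀‖ := by simpa using mem_sphere_zero_iff_norm.mp hy
    have hx₀pos : (0 : ℝ) < ‖x₀‖ := norm_pos_iff.mpr hx₀ne
    have hy0 : y ≠ 0 := by
      intro h; rw [h, norm_zero] at hyn; exact hx₀pos.ne' hyn.symm
    have h1 : (inner ℝ (T y) y : ℝ) / ‖y‖ ^ 2 ≤ μ := hray y hy0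
    have h2 : (inner ℝ (T y) y : ℝ) ≤ μ * ((k : ℝ) + 5) := by
      have hyk : ‖y‖ ^ 2 = (k : ℝ) + 5 := by rw [hyn, hnormx₀]
      rw [div_le_iff₀ (by rw [hyk]; exact hkpos)] at h1
      rwa [hyk] at h1
    have h3 : μ * ((k : ℝ) + 5) ≤ 2 * ((k : ℝ) ^ 2 + 13 * k + 22) := by
      have := mul_le_mul_of_nonneg_right (le_trans hμρ hρle) hkpos.le
      calc μ * ((k : ℝ) + 5) ≤ 2 * ((k : ℝ) ^ 2 + 13 * k + 22) / ((k : ℝ) + 5) * ((k : ℝ) + 5) :=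
            this
        _ = 2 * ((k : ℝ) ^ 2 + 13 * k + 22) := by field_simp
    show Tc.reApplyInnerSelf y ≤ Tc.reApplyInnerSelf x₀
    rw [ContinuousLinearMap.reApplyInnerSelf_apply, ContinuousLinearMap.reApplyInnerSelf_apply,
      hTcapp, hTcapp]
    simp only [RCLike.re_to_real]
    rw [hinner₀]
    exact le_trans h2 h3
  -- hence x₀ is an eigenvector, so all row sums agree : contradiction
  have hSA : IsSelfAdjoint Tc := by
    rw [ContinuousLinearMap.isSelfAdjoint_iff_isSymmetric]
    rwa [hTcdef, LinearMap.coe_toContinuousLinearMap]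
  have hev2 := hSA.hasEigenvector_of_isMaxOn hx₀ne hmax
  have heq := Module.End.mem_eigenspace_iff.mp hev2.1
  set μ' : ℝ := ⨆ x : { x : E // x ≠ 0 }, Tc.rayleighQuotient x with hμ'def
  have heq' : T x₀ = μ' • x₀ := by
    rwa [hTcdef, LinearMap.coe_toContinuousLinearMap] at heq
  have coordeq : ∀ u : V, 2 * (transmission (GG n) u : ℝ) = μ' := by
    intro u
    have h1 : (T x₀) u = (μ' • x₀) u := congrFun (congrArg (fun z : E => (z : V → ℝ)) heq') u
    rw [hTx₀ u] at h1
    have h2 : (μ' • x₀) u = μ' * x₀ u := rfl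
    rw [h2, hx₀app u, mul_one] at h1
    exact h1
  have e1 := coordeq (inl 0)
  have e2 := coordeq (inr (inr 0))
  rw [trl 0] at e1
  rw [trrr 0] at e2
  have hk' : (1 : ℝ) ≤ (k : ℝ) := by exact_mod_cast hk
  linarith [e1, e2]

end main
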